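/- Let H₁ = (1,0,0,0), H₂ = (1, 0, 1/√2, 1/2), H₃ = (1, 1/√2, 0, 1/2) in ℝ⁴, and for i ≠ j set d_{ij} = arccosh( −⟨H_i,H_j⟩ / √(⟨H_i,H_i⟩⟨H_j,H_j⟩) ) and L_{ij} = 2 sinh(d_{ij}/2). Then cosh d_{12} = cosh d_{13} = 2 and cosh d_{23} = 3, hence L_{12} = L_{13} = √2 and L_{23} = 2; these satisfy L_{12}² + L_{13}² = L_{23}², and the Euclidean area of a triangle with side lengths √2, √2, 2 is 1. (Hence the maximal horoball piece in the fundamental simplex of the Coxeter tiling [(3²,4²)] has hyperbolic volume 1/2.) -/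

import Mathlib

open Real

/-- The Lorentzian bilinear form `⟨x,y⟩ = −x⁰y⁰ + x¹y¹ + x²y² + x³y³` on `ℝ⁴`. -/
def lor (x y : Fin 4 → ℝ) : ℝ :=
  -(x 0 * y 0) + x 1 * y 1 + x 2 * y 2 + x 3 * y 3

/-- Inverse hyperbolic cosine. -/
noncomputable def _root_.arcosh (x : ℝ) : ℝ := Real.log (x + Real.sqrt (x ^ 2 - 1))

/-- Heron's formula for the Euclidean area of a triangle with side lengths `a, b, c`. -/
noncomputable def heronArea (a b c : ℝ) : ℝ :=
  (1 / 4) * Real.sqrt ((a + b + c) * (-a + b + c) * (a - b + c) * (a + b - c))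

lemma cosh_arcosh {x : ℝ} (hx : 1 ≤ x) : Real.cosh (_root_.arcosh x) = x := by
  have h1 : (0:ℝ) ≤ x ^ 2 - 1 := by nlinarith
  have hs : Real.sqrt (x ^ 2 - 1) ^ 2 = x ^ 2 - 1 := Real.sq_sqrt h1
  have hsn : 0 ≤ Real.sqrt (x ^ 2 - 1) := Real.sqrt_nonneg _
  have ht : (0:ℝ) < x + Real.sqrt (x ^ 2 - 1) := by nlinarith
  rw [_root_.arcosh, Real.cosh_eq, Real.exp_log ht, Real.exp_neg, Real.exp_log ht]
  have hinv : (x + Real.sqrt (x ^ 2 - 1))⁻¹ = x - Real.sqrt (x ^ 2 - 1) := by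
    rw [inv_eq_iff_eq_inv, eq_comm, inv_eq_iff_eq_inv] at *
    field_simp
    nlinarith
  rw [hinv]; ring

lemma arcosh_nonneg {x : ℝ} (hx : 1 ≤ x) : 0 ≤ _root_.arcosh x := by
  apply Real.log_nonneg
  have := Real.sqrt_nonneg (x ^ 2 - 1)
  linarith

lemma two_sinh_half_arcosh {x : ℝ} (hx : 1 ≤ x) :
    2 * Real.sinh (_root_.arcosh x / 2) = Real.sqrt (2 * (x - 1)) := by
  have hd := _root_.arcosh_nonneg hx
  have hsn : 0 ≤ Real.sinh (_root_.arcosh x / 2) := by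
    rw [← Real.sinh_zero]
    exact Real.sinh_le_sinh.2 (by linarith)
  have hc : Real.cosh (_root_.arcosh x) = x := _root_.cosh_arcosh hx
  have h2 : Real.cosh (2 * (_root_.arcosh x / 2)) =
      Real.cosh (_root_.arcosh x / 2) ^ 2 + Real.sinh (_root_.arcosh x / 2) ^ 2 := Real.cosh_two_mul _
  have h3 : Real.cosh (_root_.arcosh x / 2) ^ 2 = Real.sinh (_root_.arcosh x / 2) ^ 2 + 1 :=
    Real.cosh_sq _
  have h4 : 2 * (_root_.arcosh x / 2) = _root_.arcosh x := by ring
  rw [h4, hc, h3] at h2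
  have : 2 * (x - 1) = (2 * Real.sinh (_root_.arcosh x / 2)) ^ 2 := by nlinarith
  rw [this, Real.sqrt_sq (by linarith)]

/-- For the points `H₁, H₂, H₃` of the Coxeter simplex `[(3²,4²)]`,
`cosh d₁₂ = cosh d₁₃ = 2`, `cosh d₂₃ = 3`, the horospherical side lengths are
`√2, √2, 2` satisfying `L₁₂² + L₁₃² = L₂₃²`, and the Euclidean area of a triangle with
these side lengths is `1`. -/
theorem horoball_piece_3344 :
    let H₁ : Fin 4 → ℝ := ![1, 0, 0, 0]
    let H₂ : Fin 4 → ℝ := ![1, 0, 1 / Real.sqrt 2, 1/2]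
    let H₃ : Fin 4 → ℝ := ![1, 1 / Real.sqrt 2, 0, 1/2]
    let d : (Fin 4 → ℝ) → (Fin 4 → ℝ) → ℝ := fun x y =>
      _root_.arcosh (-(lor x y) / Real.sqrt (lor x x * lor y y))
    let L : (Fin 4 → ℝ) → (Fin 4 → ℝ) → ℝ := fun x y => 2 * Real.sinh (d x y / 2)
    (Real.cosh (d H₁ H₂) = 2 ∧ Real.cosh (d H₁ H₃) = 2 ∧ Real.cosh (d H₂ H₃) = 3) ∧
    (L H₁ H₂ = Real.sqrt 2 ∧ L H₁ H₃ = Real.sqrt 2 ∧ L H₂ H₃ = 2) ∧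
    Real.sqrt 2 ^ 2 + Real.sqrt 2 ^ 2 = (2 : ℝ) ^ 2 ∧
    heronArea (Real.sqrt 2) (Real.sqrt 2) 2 = 1 := by
  intro H₁ H₂ H₃ d L
  have s2 : Real.sqrt 2 * Real.sqrt 2 = 2 := Real.mul_self_sqrt (by norm_num)
  have s2pos : (0:ℝ) < Real.sqrt 2 := Real.sqrt_pos.2 (by norm_num)
  have e11 : lor H₁ H₁ = -1 := by simp [lor, H₁]
  have e22 : lor H₂ H₂ = -(1/4) := by
    simp [lor, H₂]
    field_simp
    nlinarith
  have e33 : lor H₃ H₃ = -(1/4) := by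
    simp [lor, H₃]
    field_simp
    nlinarith
  have e12 : lor H₁ H₂ = -1 := by simp [lor, H₁, H₂]
  have e13 : lor H₁ H₃ = -1 := by simp [lor, H₁, H₃]
  have e23 : lor H₂ H₃ = -(3/4) := by simp [lor, H₂, H₃]; norm_num
  have a12 : -(lor H₁ H₂) / Real.sqrt (lor H₁ H₁ * lor H₂ H₂) = 2 := by
    rw [e12, e11, e22]
    norm_num
  have a13 : -(lor H₁ H₃) / Real.sqrt (lor H₁ H₁ * lor H₃ H₃) = 2 := by
    rw [e13, e11, e33]
    norm_num
  have a23 : -(lor H₂ H₃) / Real.sqrt (lor H₂ H₂ * lor H₃ H₃) = 3 := by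
    rw [e23, e22, e33]
    norm_num
  have hd12 : d H₁ H₂ = _root_.arcosh 2 := by simp only [d, a12]
  have hd13 : d H₁ H₃ = _root_.arcosh 2 := by simp only [d, a13]
  have hd23 : d H₂ H₃ = _root_.arcosh 3 := by simp only [d, a23]
  refine ⟨⟨?_, ?_, ?_⟩, ⟨?_, ?_, ?_⟩, ?_, ?_⟩
  · rw [hd12, _root_.cosh_arcosh (by norm_num)]
  · rw [hd13, _root_.cosh_arcosh (by norm_num)]
  · rw [hd23, _root_.cosh_arcosh (by norm_num)]
  · show 2 * Real.sinh (d H₁ H₂ / 2) = _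
    rw [hd12, two_sinh_half_arcosh (by norm_num)]
    norm_num
  · show 2 * Real.sinh (d H₁ H₃ / 2) = _
    rw [hd13, two_sinh_half_arcosh (by norm_num)]
    norm_num
  · show 2 * Real.sinh (d H₂ H₃ / 2) = _
    rw [hd23, two_sinh_half_arcosh (by norm_num)]
    norm_num
  · rw [Real.sq_sqrt (by norm_num : (2:ℝ) ≥ 0)]; norm_num
  · rw [heronArea]
    have : (Real.sqrt 2 + Real.sqrt 2 + 2) * (-Real.sqrt 2 + Real.sqrt 2 + 2) *
        (Real.sqrt 2 - Real.sqrt 2 + 2) * (Real.sqrt 2 + Real.sqrt 2 - 2) = 16 := by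
      nlinarith [s2]
    rw [this, show (16:ℝ) = 4^2 by norm_num, Real.sqrt_sq (by norm_num)]
    norm_num
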